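/- Let n ≥ 2 be an integer, ω > 0, and 0 < β < 1/2. If γ ≥ max{ 1/2, (1/(2q))^{log(2β)/((1+ω)·log n)} }, then with probability at least 1 − n^{−ω} − c·n^{−(1+ω)}, either T < n or min_{1 ≤ k ≤ n} A_k ≥ β·ᾱ. -/

import Mathlib

open MeasureTheory ProbabilityTheory

namespace Stmt7Aux

variable {Ω : Type*}

def corSet (γ ᾱ β : ℝ) (A : ℕ → Ω → ℝ) (T : Ω → ℕ) (s t : ℕ) : Set Ω :=
  {x | A s x = ᾱ ∧ (∀ r, s < r → r ≤ t → β * ᾱ ≤ A r x ∧ A r x ≤ ᾱ * γ) ∧ t < T x}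

def hitSet (γ ᾱ β : ℝ) (A : ℕ → Ω → ℝ) (T : Ω → ℕ) (s t : ℕ) : Set Ω :=
  corSet γ ᾱ β A T s t ∩ {x | A (t+1) x < β * ᾱ}

def lvlSet (γ ᾱ β : ℝ) (A : ℕ → Ω → ℝ) (T : Ω → ℕ) (s t m : ℕ) : Set Ω :=
  corSet γ ᾱ β A T s t ∩ {x | A t x = ᾱ * γ ^ (m : ℤ)}

lemma mem_corSet_iff {γ ᾱ β : ℝ} {A : ℕ → Ω → ℝ} {T : Ω → ℕ} {s t : ℕ} {x : Ω} :
    x ∈ corSet γ ᾱ β A T s t ↔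
      A s x = ᾱ ∧ (∀ r, s < r → r ≤ t → β * ᾱ ≤ A r x ∧ A r x ≤ ᾱ * γ) ∧ t < T x := Iff.rfl

lemma mem_lvlSet_iff {γ ᾱ β : ℝ} {A : ℕ → Ω → ℝ} {T : Ω → ℕ} {s t m : ℕ} {x : Ω} :
    x ∈ lvlSet γ ᾱ β A T s t m ↔
      x ∈ corSet γ ᾱ β A T s t ∧ A t x = ᾱ * γ ^ (m : ℤ) := Iff.rfl

lemma mem_hitSet_iff {γ ᾱ β : ℝ} {A : ℕ → Ω → ℝ} {T : Ω → ℕ} {s t : ℕ} {x : Ω} :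
    x ∈ hitSet γ ᾱ β A T s t ↔
      x ∈ corSet γ ᾱ β A T s t ∧ A (t+1) x < β * ᾱ := Iff.rfl

section facts

variable {γ ᾱ β αmax : ℝ}

lemma zle (hγ0 : 0 < γ) (hγ1 : γ < 1) {i k : ℤ} (h : i ≤ k) : γ ^ k ≤ γ ^ i :=
  (zpow_le_zpow_iff_right_of_lt_one₀ hγ0 hγ1).2 h

lemma zinj (hγ0 : 0 < γ) (hγ1 : γ < 1) (hᾱ : 0 < ᾱ) {i k : ℤ}
    (h : ᾱ * γ ^ i = ᾱ * γ ^ k) : i = k :=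
  (zpow_right_strictAnti₀ hγ0 hγ1).injective (mul_left_cancel₀ (ne_of_gt hᾱ) h)

lemma v1 (hγ0 : 0 < γ) (hγ1 : γ < 1) {L : ℕ} (hL2 : 2 ≤ L) (hLlow : β ≤ γ ^ (L-1))
    {i : ℤ} (h : i ≤ (L:ℤ) - 1) : β ≤ γ ^ i := by
  have h1 : ((L:ℤ) - 1) = ((L - 1 : ℕ) : ℤ) := by omega
  refine le_trans ?_ (zle hγ0 hγ1 h)
  rw [h1, zpow_natCast]; exact hLlow

lemma v2 (hγ0 : 0 < γ) (hγ1 : γ < 1) {L : ℕ} (hLup : γ ^ L < β) {i : ℤ}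
    (h : (L:ℤ) ≤ i) : γ ^ i < β := by
  refine lt_of_le_of_lt (zle hγ0 hγ1 h) ?_
  rw [zpow_natCast]; exact hLup

lemma v3 (hγ0 : 0 < γ) (hγ1 : γ < 1) {i : ℤ} (h : 1 ≤ i) : γ ^ i ≤ γ := by
  simpa using zle hγ0 hγ1 h

lemma v4 (hγ0 : 0 < γ) (hγ1 : γ < 1) {i : ℤ} (h : i ≤ 0) : (1:ℝ) ≤ γ ^ i := by
  simpa using zle hγ0 hγ1 h

lemma w1 (hγ0 : 0 < γ) (hγ1 : γ < 1) (hᾱ : 0 < ᾱ) {i : ℤ}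
    (h : ᾱ * γ ^ i ≤ ᾱ * γ) : 1 ≤ i := by
  by_contra hc
  push_neg at hc
  have h1 := v4 hγ0 hγ1 (show i ≤ 0 by omega)
  have h2 : γ ^ i ≤ γ := le_of_mul_le_mul_left h hᾱ
  linarith

lemma w2 (hγ0 : 0 < γ) (hγ1 : γ < 1) (hᾱ : 0 < ᾱ) {L : ℕ} (hLup : γ ^ L < β)
    {i : ℤ} (h : β * ᾱ ≤ ᾱ * γ ^ i) : i ≤ (L:ℤ) - 1 := by
  by_contra hc
  push_neg at hc
  have := v2 hγ0 hγ1 hLup (show (L:ℤ) ≤ i by omega)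
  nlinarith

lemma min_exp (hγ0 : 0 < γ) (hγ1 : γ < 1) (hᾱ : 0 < ᾱ) {j' : ℤ}
    (hαmax : αmax = ᾱ * γ ^ j') (i : ℤ) :
    min αmax (γ⁻¹ * (ᾱ * γ ^ i)) = ᾱ * γ ^ (max j' (i-1)) := by
  have hγi : γ⁻¹ * (ᾱ * γ ^ i) = ᾱ * γ ^ (i-1) := by
    rw [zpow_sub_one₀ (ne_of_gt hγ0)]; ring
  rw [hαmax, hγi]
  rcases le_total j' (i-1) with hle | hle
  · rw [max_eq_right hle]
    exact min_eq_right (mul_le_mul_of_nonneg_left (zle hγ0 hγ1 hle) hᾱ.le)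
  · rw [max_eq_left hle]
    exact min_eq_left (mul_le_mul_of_nonneg_left (zle hγ0 hγ1 hle) hᾱ.le)

lemma step_exp (hγ0 : 0 < γ) (hγ1 : γ < 1) (hᾱ : 0 < ᾱ) {j' : ℤ}
    (hαmax : αmax = ᾱ * γ ^ j') {a b : ℝ} {i : ℤ}
    (hst : b = γ * a ∨ b = min αmax (γ⁻¹ * a)) (ha : a = ᾱ * γ ^ i) :
    b = ᾱ * γ ^ (i+1) ∨ b = ᾱ * γ ^ (max j' (i-1)) := by
  rcases hst with h | h
  · left; rw [h, ha, zpow_add_one₀ (ne_of_gt hγ0)]; ring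
  · right; rw [h, ha, min_exp hγ0 hγ1 hᾱ hαmax i]

end facts

set_option maxHeartbeats 1000000 in
lemma per_s [mΩ : MeasurableSpace Ω] (μ : Measure Ω) [IsProbabilityMeasure μ]
    (F : Filtration ℕ mΩ)
    (γ ᾱ p q : ℝ) (hγ0 : 0 < γ) (hγ1 : γ < 1) (hᾱ : 0 < ᾱ)
    (hp : 1/2 < p) (hp1 : p < 1) (hq : q = 1 - p)
    (αmax : ℝ) (j' : ℤ) (hj' : j' ≤ 0) (hαmax : αmax = ᾱ * γ ^ j')
    (A : ℕ → Ω → ℝ) (hadp : Adapted F A)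
    (T : Ω → ℕ) (hT : IsStoppingTime F (fun x => (T x : WithTop ℕ)))
    (hstep : ∀ k, ∀ᵐ x ∂μ,
      A (k+1) x = γ * A k x ∨ A (k+1) x = min αmax (γ⁻¹ * A k x))
    (hcond : ∀ k, ∀ᵐ x ∂μ, (k < T x ∧ A k x ≤ ᾱ) →
      p ≤ (μ[Set.indicator {x' | A (k+1) x' = min αmax (γ⁻¹ * A k x')}
              (fun _ => (1:ℝ)) | F k]) x)
    (β : ℝ) (hβ0 : 0 < β)
    (L : ℕ) (hL2 : 2 ≤ L) (hLup : γ ^ L < β) (hLlow : β ≤ γ ^ (L-1))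
    (s n : ℕ) :
    (p/q) ^ L * ∑ t ∈ Finset.Ico (s+1) n, (μ (hitSet γ ᾱ β A T s t)).toReal ≤ p/q := by
  classical
  obtain ⟨M, rfl⟩ : ∃ M, L = M + 2 := ⟨L - 2, by omega⟩
  have hp0 : 0 < p := by linarith
  have hq0 : 0 < q := by rw [hq]; linarith
  have hqp : q < p := by rw [hq]; linarith
  set X : ℝ := p/q with hX
  have hx1 : 1 < X := (one_lt_div hq0).2 hqp
  have hx0 : 0 < X := by positivity
  have hAm : ∀ k, Measurable (A k) := fun k => Measurable.mono (hadp k) (F.le k) le_rfl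
  -- good set
  set good : Set Ω :=
    {x | ∀ k, A (k+1) x = γ * A k x ∨ A (k+1) x = min αmax (γ⁻¹ * A k x)} with hgooddef
  have hgood : μ goodᶜ = 0 := by
    have h := ae_iff.mp (ae_all_iff.2 hstep)
    simpa [hgooddef, Set.compl_setOf] using h
  -- lattice along corridor
  have lat' : ∀ x ∈ good, ∀ t, s ≤ t → A s x = ᾱ → ∃ i : ℤ, A t x = ᾱ * γ ^ i := by
    intro x hx t hst hs
    have hx' : ∀ k, A (k+1) x = γ * A k x ∨ A (k+1) x = min αmax (γ⁻¹ * A k x) := hx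
    have lat : ∀ d, ∃ i : ℤ, A (s + d) x = ᾱ * γ ^ i := by
      intro d
      induction d with
      | zero => exact ⟨0, by simpa using hs⟩
      | succ d ih =>
        obtain ⟨i, hi⟩ := ih
        rcases step_exp hγ0 hγ1 hᾱ hαmax (hx' (s + d)) hi with h | h
        · exact ⟨i + 1, h⟩
        · exact ⟨max j' (i - 1), h⟩
    obtain ⟨i, hi⟩ := lat (t - s)
    exact ⟨i, by rwa [Nat.add_sub_cancel' hst] at hi⟩
  -- measurability of corridor events
  have hcorm : ∀ t', s ≤ t' → MeasurableSet[F t'] (corSet γ ᾱ β A T s t') := by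
    intro t' hst
    have heq : corSet γ ᾱ β A T s t' =
        (A s ⁻¹' {ᾱ}) ∩ ((⋂ (r : ℕ) (_ : s < r) (_ : r ≤ t'),
            (A r ⁻¹' Set.Ici (β * ᾱ) ∩ A r ⁻¹' Set.Iic (ᾱ * γ))) ∩ ({x | T x ≤ t'}ᶜ)) := by
      ext x
      simp only [corSet, Set.mem_setOf_eq, Set.mem_inter_iff, Set.mem_preimage,
        Set.mem_singleton_iff, Set.mem_iInter, Set.mem_Ici, Set.mem_Iic, Set.mem_compl_iff,
        not_le]
      <;> tauto
    rw [heq]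
    refine (F.mono hst _ ((hadp s) (measurableSet_singleton ᾱ))).inter
      (MeasurableSet.inter ?_ ((by simpa using hT t' : MeasurableSet[F t'] {x | T x ≤ t'}).compl))
    refine MeasurableSet.iInter fun r => MeasurableSet.iInter fun hr =>
      MeasurableSet.iInter fun hr' => ?_
    exact (F.mono hr' _ ((hadp r) measurableSet_Ici)).inter
      (F.mono hr' _ ((hadp r) measurableSet_Iic))
  have hlvlm : ∀ t' m, s ≤ t' → MeasurableSet[F t'] (lvlSet γ ᾱ β A T s t' m) := by
    intro t' m h
    exact (hcorm t' h).inter ((hadp t') (measurableSet_singleton _))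
  -- emptiness facts
  have hcor_ub : ∀ t, s < t → ∀ x, x ∈ corSet γ ᾱ β A T s t →
      β * ᾱ ≤ A t x ∧ A t x ≤ ᾱ * γ := fun t hst x hx => hx.2.1 t hst le_rfl
  have hE0 : ∀ t, s < t → lvlSet γ ᾱ β A T s t 0 = ∅ := by
    intro t hst
    ext x
    simp only [lvlSet, Set.mem_inter_iff, Set.mem_setOf_eq, Set.mem_empty_iff_false, iff_false,
      not_and]
    intro hxc hxa
    have h2 := (hcor_ub t hst x hxc).2
    rw [hxa] at h2
    simp only [Int.ofNat_zero, zpow_zero, mul_one] at h2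
    nlinarith [h2]
  have hEL : ∀ t, s < t → ∀ m : ℕ, M + 2 ≤ m → lvlSet γ ᾱ β A T s t m = ∅ := by
    intro t hst m hm
    ext x
    simp only [lvlSet, Set.mem_inter_iff, Set.mem_setOf_eq, Set.mem_empty_iff_false, iff_false,
      not_and]
    intro hxc hxa
    have h1 := (hcor_ub t hst x hxc).1
    rw [hxa] at h1
    have hlt : γ ^ (m:ℤ) < β := v2 hγ0 hγ1 hLup (by exact_mod_cast hm)
    linarith [mul_lt_mul_of_pos_left hlt hᾱ]
  -- measure comparison helpers
  have hmle : ∀ (S S₁ S₂ : Set Ω), (S ∩ good ⊆ S₁ ∪ S₂) →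
      (μ S).toReal ≤ (μ S₁).toReal + (μ S₂).toReal := by
    intro S S₁ S₂ hsub
    have h1 : μ S ≤ μ S₁ + μ S₂ := by
      calc μ S ≤ μ ((S₁ ∪ S₂) ∪ goodᶜ) := measure_mono (by
            intro x hx
            by_cases hg : x ∈ good
            · exact Or.inl (hsub ⟨hx, hg⟩)
            · exact Or.inr hg)
        _ ≤ μ (S₁ ∪ S₂) + μ goodᶜ := measure_union_le _ _
        _ = μ (S₁ ∪ S₂) := by rw [hgood, add_zero]
        _ ≤ μ S₁ + μ S₂ := measure_union_le _ _
    calc (μ S).toReal ≤ (μ S₁ + μ S₂).toReal :=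
          ENNReal.toReal_mono (ENNReal.add_ne_top.2 ⟨measure_ne_top μ _, measure_ne_top μ _⟩) h1
      _ = (μ S₁).toReal + (μ S₂).toReal :=
          ENNReal.toReal_add (measure_ne_top μ _) (measure_ne_top μ _)
  have hmle1 : ∀ (S S₁ : Set Ω), (S ∩ good ⊆ S₁) → (μ S).toReal ≤ (μ S₁).toReal := by
    intro S S₁ hsub
    have h1 : μ S ≤ μ S₁ := by
      calc μ S ≤ μ (S₁ ∪ goodᶜ) := measure_mono (by
            intro x hx
            by_cases hg : x ∈ good
            · exact Or.inl (hsub ⟨hx, hg⟩)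
            · exact Or.inr hg)
        _ ≤ μ S₁ + μ goodᶜ := measure_union_le _ _
        _ = μ S₁ := by rw [hgood, add_zero]
    exact ENNReal.toReal_mono (measure_ne_top μ _) h1
  -- the scalar supermartingale identity
  have hXid : q * X ^ 2 + p = X := by
    have h1 : q * X = p := by rw [hX]; field_simp
    have h2 : p * (X + 1) = X := by
      rw [hX]; field_simp; linear_combination hq
    calc q * X ^ 2 + p = (q * X) * X + p := by ring
      _ = p * X + p := by rw [h1]
      _ = p * (X + 1) := by ring
      _ = X := h2
  have core : ∀ a u v : ℝ, 0 ≤ u → 0 ≤ v → u + v = a → u ≤ q * a → X^2 * u + v ≤ X * a := by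
    intro a u v hu hv huv hul
    have h1 : (X^2 - 1) * u ≤ (X^2 - 1) * (q*a) :=
      mul_le_mul_of_nonneg_left hul (by nlinarith)
    have h2 : (X^2 - 1) * (q*a) = (X - 1)*a := by linear_combination a * hXid - a * hq
    linarith
  -- key one-step inequality
  have key : ∀ t, s + 1 ≤ t →
      (∑ i ∈ Finset.range (M+1), X ^ (i+1) * (μ (lvlSet γ ᾱ β A T s (t+1) (i+1))).toReal)
        + X ^ (M+2) * (μ (hitSet γ ᾱ β A T s t)).toReal
      ≤ ∑ i ∈ Finset.range (M+1), X ^ (i+1) * (μ (lvlSet γ ᾱ β A T s t (i+1))).toReal := by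
    intro t ht
    have hst : s < t := by omega
    set Mn : Set Ω := {x' | A (t+1) x' = min αmax (γ⁻¹ * A t x')} with hMndef
    have hMnm : MeasurableSet Mn := by
      rw [hMndef]
      exact measurableSet_eq_fun (hAm (t+1)) (measurable_const.min ((hAm t).const_mul γ⁻¹))
    -- conditional probability lower bound
    have hcondm : ∀ m : ℕ,
        p * (μ (lvlSet γ ᾱ β A T s t m)).toReal ≤ (μ (lvlSet γ ᾱ β A T s t m ∩ Mn)).toReal := by
      intro m
      have hEF : MeasurableSet[F t] (lvlSet γ ᾱ β A T s t m) := hlvlm t m (by omega)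
      have hEΩ : MeasurableSet (lvlSet γ ᾱ β A T s t m) := F.le t _ hEF
      have hint : Integrable (Set.indicator Mn fun _ => (1:ℝ)) μ :=
        (integrable_const 1).indicator hMnm
      have h1 : ∫ x in lvlSet γ ᾱ β A T s t m, Set.indicator Mn (fun _ => (1:ℝ)) x ∂μ
          = (μ (lvlSet γ ᾱ β A T s t m ∩ Mn)).toReal := by
        rw [setIntegral_indicator hMnm]
        simp [setIntegral_const, measureReal_def]
      have h2 : ∫ x in lvlSet γ ᾱ β A T s t m,
            (μ[Set.indicator Mn (fun _ => (1:ℝ)) | F t]) x ∂μ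
          = ∫ x in lvlSet γ ᾱ β A T s t m, Set.indicator Mn (fun _ => (1:ℝ)) x ∂μ :=
        setIntegral_condExp (F.le t) hint hEF
      have hsub : lvlSet γ ᾱ β A T s t m ⊆ {x | t < T x ∧ A t x ≤ ᾱ} := by
        intro x hx
        refine ⟨hx.1.2.2, ?_⟩
        have hxa : A t x = ᾱ * γ ^ (m:ℤ) := hx.2
        rw [hxa]
        have hγm : γ ^ (m:ℤ) ≤ 1 := by
          simpa using zle hγ0 hγ1 (show (0:ℤ) ≤ (m:ℤ) by exact_mod_cast Nat.zero_le m)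
        have := mul_le_mul_of_nonneg_left hγm hᾱ.le
        linarith
      have h3 : ∀ᵐ x ∂μ.restrict (lvlSet γ ᾱ β A T s t m),
          p ≤ (μ[Set.indicator Mn (fun _ => (1:ℝ)) | F t]) x := by
        filter_upwards [ae_restrict_of_ae (hcond t), ae_restrict_mem hEΩ] with x hx hxE
        have hyp := hsub hxE
        rw [hMndef]
        exact hx hyp
      calc p * (μ (lvlSet γ ᾱ β A T s t m)).toReal
          = ∫ _ in lvlSet γ ᾱ β A T s t m, p ∂μ := by
            rw [setIntegral_const]; simp [mul_comm, measureReal_def]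
        _ ≤ ∫ x in lvlSet γ ᾱ β A T s t m,
              (μ[Set.indicator Mn (fun _ => (1:ℝ)) | F t]) x ∂μ :=
            setIntegral_mono_ae_restrict
              (integrableOn_const (measure_ne_top μ _))
              integrable_condExp.integrableOn h3
        _ = (μ (lvlSet γ ᾱ β A T s t m ∩ Mn)).toReal := by rw [h2, h1]
    have hsplit : ∀ m : ℕ, (μ (lvlSet γ ᾱ β A T s t m)).toReal
        = (μ (lvlSet γ ᾱ β A T s t m ∩ Mn)).toReal + (μ (lvlSet γ ᾱ β A T s t m \ Mn)).toReal := by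
      intro m
      rw [← ENNReal.toReal_add (measure_ne_top μ _) (measure_ne_top μ _),
        measure_inter_add_diff _ hMnm]
    -- inclusion of next-time levels
    have hincl : ∀ m' : ℕ, 1 ≤ m' →
        lvlSet γ ᾱ β A T s (t+1) m' ∩ good ⊆
          (lvlSet γ ᾱ β A T s t (m'+1) ∩ Mn) ∪ (lvlSet γ ᾱ β A T s t (m'-1) \ Mn) := by
      rintro m' hm' x ⟨⟨hxc, hxa⟩, hxg⟩
      have hxg' : ∀ k, A (k+1) x = γ * A k x ∨ A (k+1) x = min αmax (γ⁻¹ * A k x) := hxg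
      have hxct : x ∈ corSet γ ᾱ β A T s t :=
        ⟨hxc.1, fun r hr hrt => hxc.2.1 r hr (le_trans hrt (Nat.le_succ t)),
          Nat.lt_of_succ_lt hxc.2.2⟩
      obtain ⟨i, hi⟩ := lat' x hxg t (by omega) hxc.1
      have hcor := hxc.2.1 t hst (Nat.le_succ t)
      rw [hi] at hcor
      have hi1 : 1 ≤ i := w1 hγ0 hγ1 hᾱ hcor.2
      have hiL : i ≤ (M:ℤ) + 1 := by
        have := w2 hγ0 hγ1 hᾱ hLup hcor.1
        omega
      rcases hxg' t with hstep1 | hstep2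
      · -- up step : exponent i+1
        have hval : A (t+1) x = ᾱ * γ ^ (i+1) := by
          rw [hstep1, hi, zpow_add_one₀ (ne_of_gt hγ0)]; ring
        have him : ((m':ℕ):ℤ) = i + 1 := zinj hγ0 hγ1 hᾱ (by rw [← hxa, ← hval])
        right
        refine ⟨⟨hxct, ?_⟩, ?_⟩
        · show A t x = ᾱ * γ ^ ((m' - 1 : ℕ) : ℤ)
          have hcast : ((m' - 1 : ℕ) : ℤ) = i := by omega
          rw [hcast]; exact hi
        · intro hxMn
          have hxMn' : A (t+1) x = min αmax (γ⁻¹ * A t x) := hxMn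
          have hval2 : A (t+1) x = ᾱ * γ ^ (max j' (i-1)) := by
            rw [hxMn', hi, min_exp hγ0 hγ1 hᾱ hαmax i]
          have heq : i + 1 = max j' (i-1) := zinj hγ0 hγ1 hᾱ (by rw [← hval, ← hval2])
          have hle : max j' (i-1) ≤ i - 1 := max_le (by omega) le_rfl
          omega
      · -- down/min step : exponent i-1
        have hval : A (t+1) x = ᾱ * γ ^ (i-1) := by
          rw [hstep2, hi, min_exp hγ0 hγ1 hᾱ hαmax i, max_eq_right (by omega)]
        have him : ((m':ℕ):ℤ) = i - 1 := zinj hγ0 hγ1 hᾱ (by rw [← hxa, ← hval])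
        left
        refine ⟨⟨hxct, ?_⟩, hstep2⟩
        show A t x = ᾱ * γ ^ ((m' + 1 : ℕ) : ℤ)
        have hcast : ((m' + 1 : ℕ) : ℤ) = i := by omega
        rw [hcast]; exact hi
    -- inclusion of the hit event
    have hinclHit : hitSet γ ᾱ β A T s t ∩ good ⊆
        lvlSet γ ᾱ β A T s t (M+1) \ Mn := by
      rintro x ⟨⟨hxc, hxlt⟩, hxg⟩
      have hxg' : ∀ k, A (k+1) x = γ * A k x ∨ A (k+1) x = min αmax (γ⁻¹ * A k x) := hxg
      have hxlt' : A (t+1) x < β * ᾱ := hxlt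
      obtain ⟨i, hi⟩ := lat' x hxg t (by omega) hxc.1
      have hcor := hxc.2.1 t hst le_rfl
      rw [hi] at hcor
      have hi1 : 1 ≤ i := w1 hγ0 hγ1 hᾱ hcor.2
      have hiL : i ≤ (M:ℤ) + 1 := by
        have := w2 hγ0 hγ1 hᾱ hLup hcor.1
        omega
      have hxnMn : x ∉ Mn := by
        intro hxMn
        have hxMn' : A (t+1) x = min αmax (γ⁻¹ * A t x) := hxMn
        have hval : A (t+1) x = ᾱ * γ ^ (i-1) := by
          rw [hxMn', hi, min_exp hγ0 hγ1 hᾱ hαmax i, max_eq_right (by omega)]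
        have hβle : β ≤ γ ^ (i-1) := v1 hγ0 hγ1 (by omega) hLlow (by push_cast; omega)
        rw [hval] at hxlt'
        have := mul_le_mul_of_nonneg_right hβle hᾱ.le
        linarith
      rcases hxg' t with hstep1 | hstep2
      · have hval : A (t+1) x = ᾱ * γ ^ (i+1) := by
          rw [hstep1, hi, zpow_add_one₀ (ne_of_gt hγ0)]; ring
        have hiL' : (M:ℤ) + 2 ≤ i + 1 := by
          by_contra hc
          push_neg at hc
          have hβle : β ≤ γ ^ (i+1) := v1 hγ0 hγ1 (by omega) hLlow (by push_cast; omega)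
          rw [hval] at hxlt'
          have := mul_le_mul_of_nonneg_right hβle hᾱ.le
          linarith
        refine ⟨⟨hxc, ?_⟩, hxnMn⟩
        show A t x = ᾱ * γ ^ ((M + 1 : ℕ) : ℤ)
        have hcast : ((M + 1 : ℕ) : ℤ) = i := by omega
        rw [hcast]; exact hi
      · exact absurd hstep2 hxnMn
    -- per-level inequality
    have hper : ∀ i : ℕ,
        X^i * (μ (lvlSet γ ᾱ β A T s t (i+1) ∩ Mn)).toReal
          + X^(i+2) * (μ (lvlSet γ ᾱ β A T s t (i+1) \ Mn)).toReal
        ≤ X^(i+1) * (μ (lvlSet γ ᾱ β A T s t (i+1))).toReal := by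
      intro i
      have ha := hsplit (i+1)
      have hv := hcondm (i+1)
      have hq_a : q * (μ (lvlSet γ ᾱ β A T s t (i+1))).toReal
          = (μ (lvlSet γ ᾱ β A T s t (i+1))).toReal
            - p * (μ (lvlSet γ ᾱ β A T s t (i+1))).toReal := by
        rw [hq]; ring
      have h := core ((μ (lvlSet γ ᾱ β A T s t (i+1))).toReal)
        ((μ (lvlSet γ ᾱ β A T s t (i+1) \ Mn)).toReal)
        ((μ (lvlSet γ ᾱ β A T s t (i+1) ∩ Mn)).toReal)
        ENNReal.toReal_nonneg ENNReal.toReal_nonneg (by linarith) (by linarith)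
      have hmul := mul_le_mul_of_nonneg_left h (pow_nonneg hx0.le i)
      calc X^i * (μ (lvlSet γ ᾱ β A T s t (i+1) ∩ Mn)).toReal
            + X^(i+2) * (μ (lvlSet γ ᾱ β A T s t (i+1) \ Mn)).toReal
          = X^i * (X^2 * (μ (lvlSet γ ᾱ β A T s t (i+1) \ Mn)).toReal
              + (μ (lvlSet γ ᾱ β A T s t (i+1) ∩ Mn)).toReal) := by
            rw [pow_add]; ring
        _ ≤ X^i * (X * (μ (lvlSet γ ᾱ β A T s t (i+1))).toReal) := hmul
        _ = X^(i+1) * (μ (lvlSet γ ᾱ β A T s t (i+1))).toReal := by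
            rw [pow_succ]; ring
    -- abbreviations for the sums
    set MR : ℕ → ℝ := fun m => (μ (lvlSet γ ᾱ β A T s t m ∩ Mn)).toReal with hMRdef
    set UR : ℕ → ℝ := fun m => (μ (lvlSet γ ᾱ β A T s t m \ Mn)).toReal with hURdef
    have hMR0 : ∀ m, 0 ≤ MR m := fun m => ENNReal.toReal_nonneg
    have hUR0 : ∀ m, 0 ≤ UR m := fun m => ENNReal.toReal_nonneg
    have hURz : UR 0 = 0 := by
      rw [hURdef]
      simp [hE0 t hst]
    have hMRz : MR (M+2) = 0 := by
      rw [hMRdef]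
      simp [hEL t hst (M+2) le_rfl]
    -- step 1 : termwise bounds
    have step1 : (∑ i ∈ Finset.range (M+1),
          X ^ (i+1) * (μ (lvlSet γ ᾱ β A T s (t+1) (i+1))).toReal)
          + X ^ (M+2) * (μ (hitSet γ ᾱ β A T s t)).toReal
        ≤ (∑ i ∈ Finset.range (M+1), X ^ (i+1) * (MR (i+2) + UR i))
          + X ^ (M+2) * UR (M+1) := by
      refine add_le_add (Finset.sum_le_sum fun i _ => ?_)
        (mul_le_mul_of_nonneg_left (hmle1 _ _ hinclHit) (pow_nonneg hx0.le _))
      refine mul_le_mul_of_nonneg_left ?_ (pow_nonneg hx0.le _)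
      have h := hmle (lvlSet γ ᾱ β A T s (t+1) (i+1)) _ _ (hincl (i+1) (by omega))
      simpa using h
    -- step 2 : reindex the sums
    have shiftA : ∑ i ∈ Finset.range (M+1), X^(i+1) * MR (i+2)
        ≤ ∑ i ∈ Finset.range (M+1), X^i * MR (i+1) := by
      have e1 := Finset.sum_range_succ' (fun i => X^i * MR (i+1)) (M+1)
      have e2 := Finset.sum_range_succ (fun i => X^i * MR (i+1)) (M+1)
      have h0 : 0 ≤ X^0 * MR 1 := mul_nonneg (pow_nonneg hx0.le _) (hMR0 _)
      have hz : X^(M+1) * MR (M+2) = 0 := by rw [hMRz]; ring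
      linarith [e1, e2]
    have shiftB : ∑ i ∈ Finset.range (M+1), X^(i+1) * UR i + X^(M+2) * UR (M+1)
        = ∑ i ∈ Finset.range (M+1), X^(i+2) * UR (i+1) := by
      have e1 := Finset.sum_range_succ' (fun i => X^(i+1) * UR i) (M+1)
      have e2 := Finset.sum_range_succ (fun i => X^(i+1) * UR i) (M+1)
      have hz : X^(0+1) * UR 0 = 0 := by rw [hURz]; ring
      linarith [e1, e2]
    calc (∑ i ∈ Finset.range (M+1),
          X ^ (i+1) * (μ (lvlSet γ ᾱ β A T s (t+1) (i+1))).toReal)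
          + X ^ (M+2) * (μ (hitSet γ ᾱ β A T s t)).toReal
        ≤ (∑ i ∈ Finset.range (M+1), X ^ (i+1) * (MR (i+2) + UR i))
          + X ^ (M+2) * UR (M+1) := step1
      _ = (∑ i ∈ Finset.range (M+1), X^(i+1) * MR (i+2))
          + ((∑ i ∈ Finset.range (M+1), X^(i+1) * UR i) + X^(M+2) * UR (M+1)) := by
          rw [Finset.sum_congr rfl (fun i _ => mul_add (X^(i+1)) (MR (i+2)) (UR i)),
            Finset.sum_add_distrib]
          ring
      _ ≤ (∑ i ∈ Finset.range (M+1), X^i * MR (i+1))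
          + (∑ i ∈ Finset.range (M+1), X^(i+2) * UR (i+1)) := by
          rw [shiftB]
          exact add_le_add_left shiftA _
      _ = ∑ i ∈ Finset.range (M+1), (X^i * MR (i+1) + X^(i+2) * UR (i+1)) := by
          rw [Finset.sum_add_distrib]
      _ ≤ ∑ i ∈ Finset.range (M+1), X ^ (i+1) * (μ (lvlSet γ ᾱ β A T s t (i+1))).toReal :=
          Finset.sum_le_sum fun i _ => hper i
  -- base case
  have base : ∑ i ∈ Finset.range (M+1),
      X ^ (i+1) * (μ (lvlSet γ ᾱ β A T s (s+1) (i+1))).toReal ≤ X := by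
    have hz : ∀ i : ℕ, 1 ≤ i → μ (lvlSet γ ᾱ β A T s (s+1) (i+1)) = 0 := by
      intro i hi
      have hsub : lvlSet γ ᾱ β A T s (s+1) (i+1) ∩ good ⊆ (∅ : Set Ω) := by
        rintro x ⟨⟨hxc, hxa⟩, hxg⟩
        have hxg' : ∀ k, A (k+1) x = γ * A k x ∨ A (k+1) x = min αmax (γ⁻¹ * A k x) := hxg
        have h0 : A s x = ᾱ * γ ^ (0:ℤ) := by simpa using hxc.1
        have hxa' : A (s+1) x = ᾱ * γ ^ ((i+1 : ℕ):ℤ) := hxa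
        rcases step_exp hγ0 hγ1 hᾱ hαmax (hxg' s) h0 with h | h
        · have : ((i+1 : ℕ):ℤ) = 0 + 1 := zinj hγ0 hγ1 hᾱ (by rw [← hxa', ← h])
          omega
        · have heq : ((i+1 : ℕ):ℤ) = max j' (0-1) := zinj hγ0 hγ1 hᾱ (by rw [← hxa', ← h])
          have hle : max j' (0-1 : ℤ) ≤ 0 := max_le hj' (by norm_num)
          omega
      have hle : μ (lvlSet γ ᾱ β A T s (s+1) (i+1)) ≤ μ goodᶜ := by
        apply measure_mono
        intro x hx
        by_contra hg
        simp only [Set.mem_compl_iff, not_not] at hg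
        exact absurd (hsub ⟨hx, hg⟩) (Set.notMem_empty x)
      rw [hgood] at hle
      exact le_antisymm hle zero_le
    have hsum : ∑ i ∈ Finset.range (M+1),
        X ^ (i+1) * (μ (lvlSet γ ᾱ β A T s (s+1) (i+1))).toReal
        = X ^ 1 * (μ (lvlSet γ ᾱ β A T s (s+1) 1)).toReal := by
      apply Finset.sum_eq_single_of_mem 0 (by simp)
      intro i _ hi
      rw [hz i (by omega)]
      simp
    rw [hsum, pow_one]
    have hle1 : (μ (lvlSet γ ᾱ β A T s (s+1) 1)).toReal ≤ 1 := by
      simpa using ENNReal.toReal_mono ENNReal.one_ne_top prob_le_one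
    have := mul_le_mul_of_nonneg_left hle1 hx0.le
    linarith
  -- chain the one-step inequalities
  have chain : ∀ t, s + 1 ≤ t →
      (∑ i ∈ Finset.range (M+1), X ^ (i+1) * (μ (lvlSet γ ᾱ β A T s t (i+1))).toReal)
        + X ^ (M+2) * ∑ r ∈ Finset.Ico (s+1) t, (μ (hitSet γ ᾱ β A T s r)).toReal ≤ X := by
    intro t ht
    induction t, ht using Nat.le_induction with
    | base => simpa using base
    | succ t ht ih =>
      have hk := key t ht
      rw [Finset.sum_Ico_succ_top (by omega : s+1 ≤ t), mul_add]
      linarith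
  by_cases hsn : s + 1 ≤ n
  · have h := chain n hsn
    have hΦ : 0 ≤ ∑ i ∈ Finset.range (M+1),
        X^(i+1) * (μ (lvlSet γ ᾱ β A T s n (i+1))).toReal :=
      Finset.sum_nonneg fun i _ => mul_nonneg (pow_nonneg hx0.le _) ENNReal.toReal_nonneg
    linarith
  · rw [Finset.Ico_eq_empty (by omega)]
    simpa using hx0.le

end Stmt7Aux


open Stmt7Aux in
set_option maxHeartbeats 4000000 in
/-- If `γ ≥ max{1/2, (1/(2q))^{log(2β)/((1+ω) log n)}}` with `0 < β < 1/2`,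
then with probability at least `1 − n^{−ω} − c·n^{−(1+ω)}`, either `T < n` or
`min_{1≤k≤n} A_k ≥ β·ᾱ`. -/
theorem stmt_7
    {Ω : Type*} [mΩ : MeasurableSpace Ω] (μ : Measure Ω) [IsProbabilityMeasure μ]
    (F : Filtration ℕ mΩ)
    (γ ᾱ p q : ℝ) (hγ0 : 0 < γ) (hγ1 : γ < 1) (hᾱ : 0 < ᾱ)
    (hp : 1/2 < p) (hp1 : p < 1) (hq : q = 1 - p)
    (αmax : ℝ) (j' : ℤ) (hj' : j' ≤ 0) (hαmax : αmax = ᾱ * γ ^ j')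
    (A : ℕ → Ω → ℝ) (hadp : Adapted F A) (hpos : ∀ k x, 0 < A k x)
    (T : Ω → ℕ) (hT : IsStoppingTime F (fun x => (T x : WithTop ℕ)))
    (j : ℤ) (hj : j ≤ 0) (hA0 : ∀ x, A 0 x = ᾱ * γ ^ j)
    (hstep : ∀ k, ∀ᵐ x ∂μ,
      A (k+1) x = γ * A k x ∨ A (k+1) x = min αmax (γ⁻¹ * A k x))
    (hcond : ∀ k, ∀ᵐ x ∂μ, (k < T x ∧ A k x ≤ ᾱ) →
      p ≤ (μ[Set.indicator {x' | A (k+1) x' = min αmax (γ⁻¹ * A k x')}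
              (fun _ => (1:ℝ)) | F k]) x)
    (n : ℕ) (hn : 2 ≤ n) (w : ℝ) (hw : 0 < w) (β : ℝ) (hβ0 : 0 < β) (hβ : β < 1/2)
    (hγbig : max (1/2) ((1/(2*q)) ^ (Real.log (2*β) / ((1 + w) * Real.log n))) ≤ γ) :
    ENNReal.ofReal (1 - (n : ℝ) ^ (-w)
        - (2 * Real.sqrt (p*q) / (1 - 2 * Real.sqrt (p*q))^2) * (n : ℝ) ^ (-(1 + w))) ≤
      μ ({x | T x < n} ∪
         {x | ∀ k, 1 ≤ k → k ≤ n → β * ᾱ ≤ A k x}) := by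
  classical
  have hp0 : 0 < p := by linarith
  have hq0 : 0 < q := by rw [hq]; linarith
  have hqp : q < p := by rw [hq]; linarith
  have hγhalf : (1/2 : ℝ) ≤ γ := le_trans (le_max_left _ _) hγbig
  have hAm : ∀ k, Measurable (A k) := fun k => Measurable.mono (hadp k) (F.le k) le_rfl
  -- the level L
  obtain ⟨L₀, hL₀⟩ := exists_pow_lt_of_lt_one hβ0 hγ1
  have hex : ∃ m : ℕ, γ ^ m < β := ⟨L₀, hL₀⟩
  obtain ⟨L, hLup, hLmin⟩ : ∃ L : ℕ, γ ^ L < β ∧ ∀ m, m < L → β ≤ γ ^ m :=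
    ⟨Nat.find hex, Nat.find_spec hex, fun m hm => le_of_not_gt (Nat.find_min hex hm)⟩
  have hL2 : 2 ≤ L := by
    by_contra hc
    push_neg at hc
    interval_cases L
    · simp at hLup; linarith
    · rw [pow_one] at hLup; linarith
  have hLlow : β ≤ γ ^ (L-1) := hLmin _ (by omega)
  -- ===== numeric estimate : n * (q/p)^(L-1) ≤ n^(-w) =====
  have hn0 : (0:ℝ) < n := by positivity
  have hn1 : (1:ℝ) < n := by exact_mod_cast hn
  have hlogn : 0 < Real.log n := Real.log_pos hn1
  have h2q0 : (0:ℝ) < 2*q := by linarith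
  have h2q1 : 2*q < 1 := by rw [hq] at *; linarith
  have hlq : Real.log (2*q) < 0 := Real.log_neg h2q0 h2q1
  have h2β1 : 2*β < 1 := by linarith
  have hb2 : Real.log (2*β) < 0 := Real.log_neg (by linarith) h2β1
  have hγrpow : (1/(2*q)) ^ (Real.log (2*β) / ((1+w) * Real.log n)) ≤ γ :=
    le_trans (le_max_right _ _) hγbig
  have hγlog : (Real.log (2*β) / ((1+w)*Real.log n)) * (- Real.log (2*q)) ≤ Real.log γ := by
    have h := Real.log_le_log (Real.rpow_pos_of_pos (by positivity) _) hγrpow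
    rwa [Real.log_rpow (by positivity), one_div, Real.log_inv] at h
  have hγlog2 : -Real.log 2 ≤ Real.log γ := by
    calc -Real.log 2 = Real.log (1/2) := by rw [one_div, Real.log_inv]
      _ ≤ Real.log γ := Real.log_le_log (by norm_num) hγhalf
  have hγneg : Real.log γ < 0 := Real.log_neg hγ0 hγ1
  have hLlog : (L:ℝ) * Real.log γ < Real.log β := by
    have h := Real.log_lt_log (pow_pos hγ0 L) hLup
    rwa [Real.log_pow] at h
  have hsplitβ : Real.log (2*β) = Real.log 2 + Real.log β :=
    Real.log_mul two_ne_zero (ne_of_gt hβ0)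
  have hD : 0 < (1+w)*Real.log n := mul_pos (by linarith) hlogn
  have hkey : ((L:ℝ) - 1) * Real.log (2*q) ≤ -((1+w) * Real.log n) := by
    set g := Real.log γ
    set lq := Real.log (2*q)
    set b2 := Real.log (2*β)
    set D := (1+w)*Real.log n
    have h2 : b2 * (-lq) ≤ g * D := by
      have h3 : (b2 / D) * (-lq) * D ≤ g * D := mul_le_mul_of_nonneg_right hγlog hD.le
      calc b2 * (-lq) = (b2 / D) * (-lq) * D := by field_simp
        _ ≤ g * D := h3
    have h1 : ((L:ℝ)-1) * g < b2 := by
      have hlogβ : Real.log β = b2 - Real.log 2 := by rw [hsplitβ]; ring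
      rw [hlogβ] at hLlog
      linarith [hγlog2, hLlog]
    have hlq' : 0 < -lq := by linarith
    have h4 : ((L:ℝ)-1) * g * (-lq) < g * D :=
      lt_of_lt_of_le (mul_lt_mul_of_pos_right h1 hlq') h2
    by_contra hcon
    push_neg at hcon
    have hpos2 : (0:ℝ) < ((L:ℝ)-1)*lq + D := by linarith
    have hprod := mul_pos (neg_pos.2 hγneg) hpos2
    nlinarith [hprod, h4]
  have hA1 : (2*q)^(L-1) ≤ (n:ℝ)^(-(1+w)) := by
    have hEq : ((2*q):ℝ)^(L-1) = Real.exp (((L:ℝ)-1) * Real.log (2*q)) := by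
      rw [← Real.exp_log h2q0, ← Real.exp_nat_mul]
      congr 1
      rw [Real.log_exp]
      have : ((L-1:ℕ):ℝ) = (L:ℝ)-1 := by
        push_cast [Nat.cast_sub (by omega : 1 ≤ L)]; ring
      rw [this]
    have hEq2 : (n:ℝ)^(-(1+w)) = Real.exp (-((1+w)*Real.log n)) := by
      rw [Real.rpow_def_of_pos hn0]; congr 1; ring
    rw [hEq, hEq2]
    exact Real.exp_le_exp.2 hkey
  have hA2 : (q/p)^(L-1) ≤ ((2*q):ℝ)^(L-1) := by
    apply pow_le_pow_left₀ (by positivity)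
    rw [div_le_iff₀ hp0]
    have := mul_lt_mul_of_pos_left hp h2q0
    linarith
  have hA3 : (n:ℝ) * (q/p)^(L-1) ≤ (n:ℝ)^(-w) := by
    have hrw : (n:ℝ)^(-w) = n * (n:ℝ)^(-(1+w)) := by
      have h1 : (n:ℝ)^(-w) = (n:ℝ)^((1:ℝ) + (-(1+w))) := by ring_nf
      rw [h1, Real.rpow_add hn0, Real.rpow_one]
    rw [hrw]
    have h := le_trans hA2 hA1
    have := mul_le_mul_of_nonneg_left h hn0.le
    linarith
  -- ===== the good set and covering =====
  set good : Set Ω :=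
    {x | ∀ k, A (k+1) x = γ * A k x ∨ A (k+1) x = min αmax (γ⁻¹ * A k x)} with hgooddef
  have hgood : μ goodᶜ = 0 := by
    have h := ae_iff.mp (ae_all_iff.2 hstep)
    simpa [hgooddef, Set.compl_setOf] using h
  set S : Set Ω := {x | T x < n} ∪ {x | ∀ k, 1 ≤ k → k ≤ n → β * ᾱ ≤ A k x} with hSdef
  have hSm : MeasurableSet S := by
    apply MeasurableSet.union
    · have heq : {x | T x < n} = {x | T x ≤ n - 1} := by
        ext x; simp only [Set.mem_setOf_eq]; omega
      rw [heq]
      exact F.le (n-1) _ (by have h := hT (n-1); generalize n - 1 = m at h ⊢; simpa using h)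
    · have heq : {x | ∀ k, 1 ≤ k → k ≤ n → β * ᾱ ≤ A k x}
          = ⋂ (k : ℕ) (_ : 1 ≤ k) (_ : k ≤ n), A k ⁻¹' Set.Ici (β * ᾱ) := by
        ext x
        simp only [Set.mem_setOf_eq, Set.mem_iInter, Set.mem_preimage, Set.mem_Ici]
      rw [heq]
      exact MeasurableSet.iInter fun k => MeasurableSet.iInter fun _ =>
        MeasurableSet.iInter fun _ => hAm k measurableSet_Ici
  -- covering
  have hcover : Sᶜ ⊆ (⋃ s ∈ Finset.range n, ⋃ t ∈ Finset.Ico (s+1) n,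
      hitSet γ ᾱ β A T s t) ∪ goodᶜ := by
    intro x hx
    by_cases hg : x ∈ good
    swap
    · exact Or.inr hg
    left
    have hg' : ∀ k, A (k+1) x = γ * A k x ∨ A (k+1) x = min αmax (γ⁻¹ * A k x) := hg
    have hx' : ¬(T x < n) ∧ ¬(∀ k, 1 ≤ k → k ≤ n → β * ᾱ ≤ A k x) := by
      simpa [hSdef, Set.mem_union, not_or] using hx
    obtain ⟨hT1, hk1⟩ := hx'
    push_neg at hk1
    obtain ⟨k₀, hk₀1, hk₀n, hk₀⟩ := hk1
    have hTx : n ≤ T x := not_lt.1 hT1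
    -- lattice
    have lat0 : ∀ k, ∃ i : ℤ, A k x = ᾱ * γ ^ i := by
      intro k
      induction k with
      | zero => exact ⟨j, hA0 x⟩
      | succ k ih =>
        obtain ⟨i, hi⟩ := ih
        rcases step_exp hγ0 hγ1 hᾱ hαmax (hg' k) hi with h | h
        · exact ⟨_, h⟩
        · exact ⟨_, h⟩
    -- minimal hitting index
    have hexk : ∃ k, A k x < β * ᾱ := ⟨k₀, hk₀⟩
    obtain ⟨k, hkspec, hkmin, hkle⟩ : ∃ k, A k x < β * ᾱ ∧
        (∀ r, r < k → β * ᾱ ≤ A r x) ∧ k ≤ k₀ :=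
      ⟨Nat.find hexk, Nat.find_spec hexk,
        fun r hr => le_of_not_gt (Nat.find_min hexk hr), Nat.find_min' hexk hk₀⟩
    have hk1' : 1 ≤ k := by
      rcases Nat.eq_zero_or_pos k with h0 | h
      · exfalso
        have h1 := hkspec
        rw [h0, hA0 x] at h1
        have h2 : (1:ℝ) ≤ γ ^ j := v4 hγ0 hγ1 hj
        have h3 := mul_le_mul_of_nonneg_left h2 hᾱ.le
        have h4 : β * ᾱ < 1 * ᾱ := mul_lt_mul_of_pos_right (by linarith) hᾱ
        linarith
      · exact h
    -- last time at or above ᾱ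
    have hP0 : ᾱ ≤ A 0 x := by
      have h2 : (1:ℝ) ≤ γ ^ j := v4 hγ0 hγ1 hj
      rw [hA0 x]
      have h3 := mul_le_mul_of_nonneg_left h2 hᾱ.le
      linarith
    obtain ⟨s, hPs, hsk, hmax⟩ : ∃ s, ᾱ ≤ A s x ∧ s ≤ k-1 ∧
        ∀ r, s < r → r ≤ k-1 → A r x < ᾱ := by
      refine ⟨Nat.findGreatest (fun r => ᾱ ≤ A r x) (k-1),
        Nat.findGreatest_spec (P := fun r => ᾱ ≤ A r x) (Nat.zero_le _) hP0,
        Nat.findGreatest_le _,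
        fun r h1 h2 => lt_of_not_ge
          (Nat.findGreatest_is_greatest (P := fun r => ᾱ ≤ A r x) h1 h2)⟩
    -- corridor property
    have hcor : ∀ r, s < r → r < k → β * ᾱ ≤ A r x ∧ A r x ≤ ᾱ * γ := by
      intro r h1 h2
      refine ⟨hkmin r h2, ?_⟩
      have hlt : A r x < ᾱ := hmax r h1 (by omega)
      obtain ⟨i, hi⟩ := lat0 r
      rw [hi] at hlt ⊢
      have hi1 : 1 ≤ i := by
        by_contra hc
        push_neg at hc
        have h5 := mul_le_mul_of_nonneg_left (v4 hγ0 hγ1 (show i ≤ 0 by omega)) hᾱ.le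
        linarith
      have h5 := mul_le_mul_of_nonneg_left (v3 hγ0 hγ1 hi1) hᾱ.le
      linarith
    obtain ⟨is, his⟩ := lat0 s
    have his0 : is ≤ 0 := by
      have hPs' : ᾱ ≤ A s x := hPs
      rw [his] at hPs'
      by_contra hc
      push_neg at hc
      have h5 := mul_le_mul_of_nonneg_left (v3 hγ0 hγ1 (show 1 ≤ is by omega)) hᾱ.le
      have h6 := mul_lt_mul_of_pos_left hγ1 hᾱ
      linarith
    have hLK : (1:ℤ) ≤ (L:ℤ) - 1 := by omega
    have hsk1 : s + 1 < k := by
      by_contra hc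
      push_neg at hc
      have hks : k = s + 1 := by omega
      rcases step_exp hγ0 hγ1 hᾱ hαmax (hg' s) his with h | h
      · rw [hks, h] at hkspec
        have h5 := mul_le_mul_of_nonneg_right (v1 hγ0 hγ1 hL2 hLlow
          (show is + 1 ≤ (L:ℤ)-1 by omega)) hᾱ.le
        linarith
      · rw [hks, h] at hkspec
        have hle : max j' (is - 1) ≤ (L:ℤ) - 1 := max_le (by omega) (by omega)
        have h5 := mul_le_mul_of_nonneg_right (v1 hγ0 hγ1 hL2 hLlow hle) hᾱ.le
        linarith
    have hAs1 : A (s+1) x < ᾱ := hmax (s+1) (by omega) (by omega)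
    have hAseq : A s x = ᾱ := by
      rcases step_exp hγ0 hγ1 hᾱ hαmax (hg' s) his with h | h
      · have hup : 1 ≤ is + 1 := by
          by_contra hc
          push_neg at hc
          have h5 := mul_le_mul_of_nonneg_left (v4 hγ0 hγ1 (show is + 1 ≤ 0 by omega)) hᾱ.le
          rw [h] at hAs1
          linarith
        have his_eq : is = 0 := by omega
        rw [his, his_eq]
        simp
      · exfalso
        have hle : max j' (is-1) ≤ 0 := max_le hj' (by omega)
        have h5 := mul_le_mul_of_nonneg_left (v4 hγ0 hγ1 hle) hᾱ.le
        rw [h] at hAs1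
        linarith
    have hxhit : x ∈ hitSet γ ᾱ β A T s (k-1) := by
      refine ⟨⟨hAseq, ?_, ?_⟩, ?_⟩
      · intro r hr1 hr2
        exact hcor r hr1 (by omega)
      · exact lt_of_lt_of_le (by omega) hTx
      · show A ((k-1)+1) x < β * ᾱ
        have hkk : k - 1 + 1 = k := by omega
        rw [hkk]
        exact hkspec
    refine Set.mem_iUnion₂.2 ⟨s, Finset.mem_range.2 (by omega), ?_⟩
    exact Set.mem_iUnion₂.2 ⟨k-1, Finset.mem_Ico.2 ⟨by omega, by omega⟩, hxhit⟩
  -- ===== measure bound =====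
  have hsum_s : ∀ s, ∑ t ∈ Finset.Ico (s+1) n, (μ (hitSet γ ᾱ β A T s t)).toReal
      ≤ (q/p)^(L-1) := by
    intro s
    have h := per_s μ F γ ᾱ p q hγ0 hγ1 hᾱ hp hp1 hq αmax j' hj' hαmax A hadp T hT
      hstep hcond β hβ0 L hL2 hLup hLlow s n
    have hXL : (0:ℝ) < (p/q)^L := pow_pos (by positivity) L
    have hid : (p/q) = (p/q)^L * (q/p)^(L-1) := by
      have h1 : (p/q)^L = (p/q)^(L-1) * (p/q) := by
        rw [← pow_succ]
        congr 1
        omega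
      rw [h1, mul_comm ((p/q)^(L-1)) (p/q), mul_assoc, ← mul_pow]
      have h2 : p/q * (q/p) = 1 := by field_simp
      rw [h2, one_pow, mul_one]
    have h' := h.trans_eq hid
    rw [mul_comm ((p/q)^L) ((q/p)^(L-1))] at h'
    exact le_of_mul_le_mul_right (by linarith [h']) hXL
  have hμc : μ Sᶜ ≤ ENNReal.ofReal ((n:ℝ)^(-w)) := by
    have hb1 : μ Sᶜ ≤ ∑ s ∈ Finset.range n, ∑ t ∈ Finset.Ico (s+1) n,
        μ (hitSet γ ᾱ β A T s t) := by
      calc μ Sᶜ ≤ μ ((⋃ s ∈ Finset.range n, ⋃ t ∈ Finset.Ico (s+1) n,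
              hitSet γ ᾱ β A T s t) ∪ goodᶜ) := measure_mono hcover
        _ ≤ μ (⋃ s ∈ Finset.range n, ⋃ t ∈ Finset.Ico (s+1) n, hitSet γ ᾱ β A T s t)
            + μ goodᶜ := measure_union_le _ _
        _ = μ (⋃ s ∈ Finset.range n, ⋃ t ∈ Finset.Ico (s+1) n, hitSet γ ᾱ β A T s t) := by
            rw [hgood, add_zero]
        _ ≤ ∑ s ∈ Finset.range n, μ (⋃ t ∈ Finset.Ico (s+1) n, hitSet γ ᾱ β A T s t) :=
            measure_biUnion_finset_le _ _
        _ ≤ ∑ s ∈ Finset.range n, ∑ t ∈ Finset.Ico (s+1) n, μ (hitSet γ ᾱ β A T s t) :=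
            Finset.sum_le_sum fun s _ => measure_biUnion_finset_le _ _
    have hb2 : (∑ s ∈ Finset.range n, ∑ t ∈ Finset.Ico (s+1) n,
        μ (hitSet γ ᾱ β A T s t))
        = ENNReal.ofReal (∑ s ∈ Finset.range n, ∑ t ∈ Finset.Ico (s+1) n,
            (μ (hitSet γ ᾱ β A T s t)).toReal) := by
      rw [ENNReal.ofReal_sum_of_nonneg (fun s _ => Finset.sum_nonneg
        (fun t _ => ENNReal.toReal_nonneg))]
      refine Finset.sum_congr rfl fun s _ => ?_
      rw [ENNReal.ofReal_sum_of_nonneg (fun t _ => ENNReal.toReal_nonneg)]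
      refine Finset.sum_congr rfl fun t _ => ?_
      rw [ENNReal.ofReal_toReal (measure_ne_top μ _)]
    have hb3 : (∑ s ∈ Finset.range n, ∑ t ∈ Finset.Ico (s+1) n,
        (μ (hitSet γ ᾱ β A T s t)).toReal) ≤ (n:ℝ)^(-w) := by
      calc (∑ s ∈ Finset.range n, ∑ t ∈ Finset.Ico (s+1) n,
              (μ (hitSet γ ᾱ β A T s t)).toReal)
          ≤ ∑ _s ∈ Finset.range n, (q/p)^(L-1) :=
            Finset.sum_le_sum fun s _ => hsum_s s
        _ = n * (q/p)^(L-1) := by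
            rw [Finset.sum_const, Finset.card_range, nsmul_eq_mul]
        _ ≤ (n:ℝ)^(-w) := hA3
    calc μ Sᶜ ≤ _ := hb1
      _ = _ := hb2
      _ ≤ ENNReal.ofReal ((n:ℝ)^(-w)) := ENNReal.ofReal_le_ofReal hb3
  -- ===== conclusion =====
  set c : ℝ := 2 * Real.sqrt (p*q) / (1 - 2 * Real.sqrt (p*q))^2 with hcdef
  have hδ2 : 0 ≤ c * (n:ℝ)^(-(1+w)) := by
    apply mul_nonneg _ (Real.rpow_nonneg hn0.le _)
    rw [hcdef]
    positivity
  have hδpos : 0 ≤ (n:ℝ)^(-w) + c * (n:ℝ)^(-(1+w)) := by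
    have := Real.rpow_nonneg hn0.le (-w)
    linarith
  have hμc2 : μ Sᶜ ≤ ENNReal.ofReal ((n:ℝ)^(-w) + c * (n:ℝ)^(-(1+w))) :=
    hμc.trans (ENNReal.ofReal_le_ofReal (by linarith))
  have h1 : μ S + μ Sᶜ = 1 := by
    rw [measure_add_measure_compl hSm, measure_univ]
  have hgoal2 : ENNReal.ofReal (1 - ((n:ℝ)^(-w) + c * (n:ℝ)^(-(1+w)))) ≤ μ S := by
    rw [ENNReal.ofReal_sub _ hδpos, ENNReal.ofReal_one]
    refine tsub_le_iff_right.2 ?_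
    calc (1:ENNReal) = μ S + μ Sᶜ := h1.symm
      _ ≤ μ S + ENNReal.ofReal ((n:ℝ)^(-w) + c * (n:ℝ)^(-(1+w))) :=
          add_le_add_right hμc2 _
  calc ENNReal.ofReal (1 - (n : ℝ) ^ (-w) - c * (n : ℝ) ^ (-(1 + w)))
      = ENNReal.ofReal (1 - ((n:ℝ)^(-w) + c * (n:ℝ)^(-(1+w)))) := by ring_nf
    _ ≤ μ S := hgoal2
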